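/- arXiv:1011.0335 — 2 statements merged into one kernel-verified Lean document; each statement's English description precedes it below -/
import Mathlib

section
/- Let c > 0 and let f₀ : ℝ → ℝ be C¹ with f₀' bounded below by -m where m > 0 (or f₀' ≥ 0, in which case T = ∞). Then for t ∈ [0, 1/(c m)), the implicit equation f(s,t) = f₀(s - c f(s,t) t) has a unique C¹ solution f, and f satisfies f_t + c f f_s = 0. -/
open Set Filter Function Topology

noncomputable section BurgersAux

/-- The characteristic map `u ↦ u + c t f₀ u`. -/
def burgersChr (c : ℝ) (f₀ : ℝ → ℝ) (t u : ℝ) : ℝ := u + c * t * f₀ u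

lemma burgersChr_hasDerivAt (c : ℝ) {f₀ : ℝ → ℝ} (hf₀ : ContDiff ℝ 1 f₀) (t u : ℝ) :
    HasDerivAt (burgersChr c f₀ t) (1 + c * t * deriv f₀ u) u := by
  have h := ((hf₀.differentiable one_ne_zero u).hasDerivAt.const_mul (c * t))
  exact (hasDerivAt_id u).add h

lemma burgersChr_bijective {c m : ℝ} (hc : 0 < c) (hm : 0 < m) {f₀ : ℝ → ℝ}
    (hf₀ : ContDiff ℝ 1 f₀) (hbound : ∀ s, -m ≤ deriv f₀ s) {t : ℝ}
    (ht0 : 0 ≤ t) (htT : t < 1 / (c * m)) :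
    Function.Bijective (burgersChr c f₀ t) := by
  have hcm : 0 < c * m := mul_pos hc hm
  have ht1 : t * (c * m) < 1 := (lt_div_iff₀ hcm).mp htT
  have hder := burgersChr_hasDerivAt c hf₀ t
  have hdiff : Differentiable ℝ (burgersChr c f₀ t) := fun u => (hder u).differentiableAt
  have hge : ∀ u, 1 - c * m * t ≤ deriv (burgersChr c f₀ t) u := by
    intro u
    rw [(hder u).deriv]
    nlinarith [mul_le_mul_of_nonneg_left (hbound u) (mul_nonneg hc.le ht0)]
  have hδ : 0 < 1 - c * m * t := by nlinarith
  have hpos : ∀ u, 0 < deriv (burgersChr c f₀ t) u := fun u => lt_of_lt_of_le hδ (hge u)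
  have hgrow := mul_sub_le_image_sub_of_le_deriv hdiff hge
  refine ⟨(strictMono_of_deriv_pos hpos).injective, Continuous.surjective hdiff.continuous ?_ ?_⟩
  · refine tendsto_atTop_mono' atTop ?_
      (tendsto_atTop_add_const_left _ (burgersChr c f₀ t 0) (Tendsto.const_mul_atTop hδ tendsto_id))
    filter_upwards [eventually_ge_atTop (0:ℝ)] with u hu
    have := hgrow hu
    simp only [id] at *
    linarith
  · refine tendsto_atBot_mono' atBot ?_
      (tendsto_atBot_add_const_left _ (burgersChr c f₀ t 0) (Tendsto.const_mul_atBot hδ tendsto_id))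
    filter_upwards [eventually_le_atBot (0:ℝ)] with u hu
    have := hgrow hu
    simp only [id] at *
    linarith

/-- The solution of the implicit Burgers equation, extended linearly to negative times. -/
def burgersSol (c : ℝ) (f₀ : ℝ → ℝ) (s t : ℝ) : ℝ :=
  if 0 ≤ t then f₀ (Function.invFun (burgersChr c f₀ t) s)
  else f₀ s - c * f₀ s * deriv f₀ s * t

lemma burgersSol_of_nonneg (c : ℝ) (f₀ : ℝ → ℝ) (s : ℝ) {t : ℝ} (ht : 0 ≤ t) :
    burgersSol c f₀ s t = f₀ (Function.invFun (burgersChr c f₀ t) s) := if_pos ht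

lemma burgersSol_unique {c : ℝ} {f₀ : ℝ → ℝ} {t : ℝ}
    (hbij : Function.Bijective (burgersChr c f₀ t)) (ht : 0 ≤ t) {s y : ℝ}
    (hy : y = f₀ (s - c * y * t)) : y = burgersSol c f₀ s t := by
  set u := s - c * y * t with hu
  have hchr : burgersChr c f₀ t u = s := by
    simp only [burgersChr, hu, ← hy]; rw [hu] at hy; rw [← hy]; ring
  have hinv : Function.invFun (burgersChr c f₀ t) s = u := by
    rw [← hchr]; exact Function.leftInverse_invFun hbij.1 u
  rw [burgersSol_of_nonneg c f₀ s ht, hinv, hy]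

lemma burgersSol_eqn {c : ℝ} {f₀ : ℝ → ℝ} {t : ℝ}
    (hbij : Function.Bijective (burgersChr c f₀ t)) (ht : 0 ≤ t) (s : ℝ) :
    burgersSol c f₀ s t = f₀ (s - c * burgersSol c f₀ s t * t) := by
  rw [burgersSol_of_nonneg c f₀ s ht]
  have hchr : burgersChr c f₀ t (Function.invFun (burgersChr c f₀ t) s) = s :=
    Function.rightInverse_invFun hbij.2 s
  congr 1
  simp only [burgersChr] at hchr
  linear_combination hchr

end BurgersAux

noncomputable def eAux (α β : ℝ) (hα : α ≠ 0) : (ℝ × ℝ) ≃L[ℝ] (ℝ × ℝ) :=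
  (LinearEquiv.ofLinear
    (LinearMap.prod (α • LinearMap.fst ℝ ℝ ℝ + β • LinearMap.snd ℝ ℝ ℝ) (LinearMap.snd ℝ ℝ ℝ))
    (LinearMap.prod (α⁻¹ • LinearMap.fst ℝ ℝ ℝ - (α⁻¹ * β) • LinearMap.snd ℝ ℝ ℝ)
      (LinearMap.snd ℝ ℝ ℝ))
    (by
      apply LinearMap.ext; rintro ⟨x, y⟩
      simp [LinearMap.prod_apply, Prod.ext_iff]
      field_simp
      ring)
    (by
      apply LinearMap.ext; rintro ⟨x, y⟩
      simp [LinearMap.prod_apply, Prod.ext_iff]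
      field_simp
      ring)).toContinuousLinearEquiv

lemma eAux_apply (α β : ℝ) (hα : α ≠ 0) (v : ℝ × ℝ) :
    (eAux α β hα : (ℝ × ℝ) →L[ℝ] (ℝ × ℝ)) v = (α * v.1 + β * v.2, v.2) := by
  simp [eAux, LinearEquiv.coe_toContinuousLinearEquiv']

lemma burgersKey {c m : ℝ} (hc : 0 < c) (hm : 0 < m) {f₀ : ℝ → ℝ} (hf₀ : ContDiff ℝ 1 f₀)
    (hbound : ∀ s, -m ≤ deriv f₀ s) (p : ℝ × ℝ) (hp : p.2 ∈ Set.Ico 0 (1 / (c * m))) :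
    ∃ φ : ℝ × ℝ → ℝ, ContDiffAt ℝ 1 φ p ∧ φ p = burgersSol c f₀ p.1 p.2 ∧
      (∀ᶠ q in 𝓝 p, φ q = f₀ (q.1 - c * φ q * q.2)) ∧
      (∀ᶠ q in 𝓝 p, q.2 ∈ Set.Ico 0 (1 / (c * m)) → φ q = burgersSol c f₀ q.1 q.2) := by
  obtain ⟨ht0, htT⟩ := hp
  have hbij := burgersChr_bijective hc hm hf₀ hbound ht0 htT
  set u₀ := Function.invFun (burgersChr c f₀ p.2) p.1 with hu₀def
  have hroot : burgersChr c f₀ p.2 u₀ = p.1 := Function.rightInverse_invFun hbij.2 p.1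
  set Ψ : ℝ × ℝ → ℝ × ℝ := fun q => (q.1 + c * q.2 * f₀ q.1, q.2) with hΨdef
  have hΨa : Ψ (u₀, p.2) = p := by
    simp only [burgersChr] at hroot
    exact Prod.ext hroot rfl
  have hΨC : ContDiff ℝ 1 Ψ :=
    (contDiff_fst.add ((contDiff_const.mul contDiff_snd).mul (hf₀.comp contDiff_fst))).prodMk
      contDiff_snd
  have hα : 0 < 1 + c * p.2 * deriv f₀ u₀ := by
    have ht1 : p.2 * (c * m) < 1 := (lt_div_iff₀ (mul_pos hc hm)).mp htT
    nlinarith [mul_le_mul_of_nonneg_left (hbound u₀) (mul_nonneg hc.le ht0)]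
  set e := eAux (1 + c * p.2 * deriv f₀ u₀) (c * f₀ u₀) hα.ne'
  have hΨ' : HasFDerivAt Ψ (e : (ℝ × ℝ) →L[ℝ] (ℝ × ℝ)) (u₀, p.2) := by
    have h1 : HasFDerivAt (fun q : ℝ × ℝ => f₀ q.1)
        ((deriv f₀ u₀) • ContinuousLinearMap.fst ℝ ℝ ℝ) (u₀, p.2) :=
      (hf₀.differentiable one_ne_zero u₀).hasDerivAt.comp_hasFDerivAt (u₀, p.2) hasFDerivAt_fst
    have h2 : HasFDerivAt (fun q : ℝ × ℝ => c * q.2) (c • ContinuousLinearMap.snd ℝ ℝ ℝ)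
        (u₀, p.2) := hasFDerivAt_snd.const_mul c
    have h5 := (hasFDerivAt_fst.add (h2.mul h1)).prodMk hasFDerivAt_snd
    have heq : (e : (ℝ × ℝ) →L[ℝ] (ℝ × ℝ)) =
        (ContinuousLinearMap.fst ℝ ℝ ℝ +
          ((c * (u₀, p.2).2) • ((deriv f₀ u₀) • ContinuousLinearMap.fst ℝ ℝ ℝ) +
            f₀ (u₀, p.2).1 • (c • ContinuousLinearMap.snd ℝ ℝ ℝ))).prod
          (ContinuousLinearMap.snd ℝ ℝ ℝ) := by
      refine ContinuousLinearMap.ext fun v => ?_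
      rw [eAux_apply]
      simp [Prod.ext_iff]
      ring
    rw [heq]
    exact h5
  have strict := hΨC.contDiffAt.hasStrictFDerivAt' hΨ' one_ne_zero
  set inv := hΨC.contDiffAt.localInverse hΨ' one_ne_zero with hinvdef
  have hinvC : ContDiffAt ℝ 1 inv p := by
    have h := hΨC.contDiffAt.to_localInverse (f' := e) hΨ' one_ne_zero
    rwa [hΨa] at h
  have hri : ∀ᶠ q in 𝓝 p, Ψ (inv q) = q := by
    have h := strict.eventually_right_inverse
    rwa [hΨa] at h
  refine ⟨fun q => f₀ (inv q).1, hf₀.contDiffAt.comp p hinvC.fst, ?_, ?_, ?_⟩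
  rotate_left
  · filter_upwards [hri] with q hq
    simp only [hΨdef, Prod.ext_iff] at hq
    obtain ⟨h1, h2⟩ := hq
    rw [h2] at h1
    congr 1
    linear_combination h1
  · filter_upwards [hri] with q hq hq2
    simp only [hΨdef, Prod.ext_iff] at hq
    obtain ⟨h1, h2⟩ := hq
    rw [h2] at h1
    have hbij' := burgersChr_bijective hc hm hf₀ hbound hq2.1 hq2.2
    have hinv : Function.invFun (burgersChr c f₀ q.2) q.1 = (inv q).1 := by
      conv_lhs => rw [← h1]
      exact Function.leftInverse_invFun hbij'.1 _
    rw [burgersSol_of_nonneg c f₀ q.1 hq2.1, hinv]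
  · -- value at p
    have h := hri.self_of_nhds
    simp only [hΨdef, Prod.ext_iff] at h
    obtain ⟨h1, h2⟩ := h
    rw [h2] at h1
    have hinv : Function.invFun (burgersChr c f₀ p.2) p.1 = (inv p).1 := by
      conv_lhs => rw [← h1]
      exact Function.leftInverse_invFun hbij.1 _
    rw [burgersSol_of_nonneg c f₀ p.1 ht0, hinv]

theorem stmt_8 (c m : ℝ) (hc : 0 < c) (hm : 0 < m)
    (f₀ : ℝ → ℝ) (hf₀ : ContDiff ℝ 1 f₀)
    (hbound : ∀ s, -m ≤ deriv f₀ s) :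
    ∃ f : ℝ → ℝ → ℝ,
      ContDiffOn ℝ 1 (fun p : ℝ × ℝ => f p.1 p.2) (Set.univ ×ˢ Set.Ico 0 (1 / (c * m))) ∧
      (∀ s : ℝ, ∀ t ∈ Set.Ico (0:ℝ) (1 / (c * m)), f s t = f₀ (s - c * f s t * t)) ∧
      (∀ s : ℝ, ∀ t ∈ Set.Ico (0:ℝ) (1 / (c * m)),
        deriv (fun τ => f s τ) t + c * f s t * deriv (fun σ => f σ t) s = 0) ∧
      ∀ g : ℝ → ℝ → ℝ,
        (∀ s : ℝ, ∀ t ∈ Set.Ico (0:ℝ) (1 / (c * m)), g s t = f₀ (s - c * g s t * t)) →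
        ∀ s : ℝ, ∀ t ∈ Set.Ico (0:ℝ) (1 / (c * m)), g s t = f s t := by
  refine ⟨burgersSol c f₀, ?_, ?_, ?_, ?_⟩
  · -- C¹ smoothness
    intro p hp
    obtain ⟨φ, hφC, hφp, _, hsolq⟩ := burgersKey hc hm hf₀ hbound p hp.2
    refine hφC.contDiffWithinAt.congr_of_eventuallyEq ?_ hφp.symm
    filter_upwards [hsolq.filter_mono nhdsWithin_le_nhds, self_mem_nhdsWithin] with q h1 h2
    exact (h1 h2.2).symm
  · -- the implicit equation
    intro s t ht
    exact burgersSol_eqn (burgersChr_bijective hc hm hf₀ hbound ht.1 ht.2) ht.1 s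
  · -- the PDE
    intro s t ht
    obtain ⟨φ, hφC, hφp, hidq, hsolq⟩ := burgersKey hc hm hf₀ hbound (s, t) ht
    have hA : HasFDerivAt φ (fderiv ℝ φ (s, t)) (s, t) := (hφC.differentiableAt one_ne_zero).hasFDerivAt
    set A := fderiv ℝ φ (s, t) with hAdef
    set F := φ (s, t) with hFdef
    set k := deriv f₀ (s - c * F * t) with hkdef
    -- derivative of the inner map q ↦ q.1 - c * φ q * q.2
    have hψ : HasFDerivAt (fun q : ℝ × ℝ => q.1 - c * φ q * q.2)
        (ContinuousLinearMap.fst ℝ ℝ ℝ -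
          ((c * F) • ContinuousLinearMap.snd ℝ ℝ ℝ + t • (c • A))) (s, t) :=
      hasFDerivAt_fst.sub ((hA.const_mul c).mul hasFDerivAt_snd)
    have hk : HasDerivAt f₀ k (s - c * F * t) := (hf₀.differentiable one_ne_zero _).hasDerivAt
    have hcomp := hk.comp_hasFDerivAt (s, t) hψ
    have hφ' : HasFDerivAt φ
        (k • (ContinuousLinearMap.fst ℝ ℝ ℝ -
          ((c * F) • ContinuousLinearMap.snd ℝ ℝ ℝ + t • (c • A)))) (s, t) :=
      hcomp.congr_of_eventuallyEq (hidq.mono fun q h => h)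
    have hAeq : A = k • (ContinuousLinearMap.fst ℝ ℝ ℝ -
        ((c * F) • ContinuousLinearMap.snd ℝ ℝ ℝ + t • (c • A))) := hA.unique hφ'
    have h10 : A (1, 0) = k * (1 - c * t * A (1, 0)) := by
      conv_lhs => rw [hAeq]
      simp only [ContinuousLinearMap.smul_apply, ContinuousLinearMap.sub_apply,
        ContinuousLinearMap.add_apply, ContinuousLinearMap.coe_fst',
        ContinuousLinearMap.coe_snd', smul_eq_mul]
      ring
    have h01 : A (0, 1) = k * (-(c * F) - c * t * A (0, 1)) := by
      conv_lhs => rw [hAeq]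
      simp only [ContinuousLinearMap.smul_apply, ContinuousLinearMap.sub_apply,
        ContinuousLinearMap.add_apply, ContinuousLinearMap.coe_fst',
        ContinuousLinearMap.coe_snd', smul_eq_mul]
      ring
    have hkge : -m ≤ k := hbound _
    have hpos : 0 < 1 + k * (c * t) := by
      have ht1 : t * (c * m) < 1 := (lt_div_iff₀ (mul_pos hc hm)).mp ht.2
      nlinarith [mul_le_mul_of_nonneg_left hkge (mul_nonneg hc.le ht.1)]
    have hsum : A (0, 1) + c * F * A (1, 0) = 0 := by
      have h3 : (A (0, 1) + c * F * A (1, 0)) * (1 + k * (c * t)) = 0 := by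
        linear_combination h01 + (c * F) * h10
      exact (mul_eq_zero.mp h3).resolve_right hpos.ne'
    -- spatial derivative
    have hcurve_s : HasDerivAt (fun σ' => φ (σ', t)) (A (1, 0)) s :=
      hA.comp_hasDerivAt s ((hasDerivAt_id s).prodMk (hasDerivAt_const s t))
    have hconts : Tendsto (fun σ' : ℝ => (σ', t)) (𝓝 s) (𝓝 (s, t)) :=
      (Continuous.prodMk_left t).tendsto s
    have hds : deriv (fun σ => burgersSol c f₀ σ t) s = A (1, 0) := by
      refine (hcurve_s.congr_of_eventuallyEq ?_).deriv
      filter_upwards [hconts.eventually hsolq] with σ' h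
      exact (h ht).symm
    -- time derivative
    have hcurve_t : HasDerivAt (fun τ => φ (s, τ)) (A (0, 1)) t :=
      hA.comp_hasDerivAt t ((hasDerivAt_const t s).prodMk (hasDerivAt_id t))
    have hcontt : Tendsto (fun τ : ℝ => (s, τ)) (𝓝 t) (𝓝 (s, t)) :=
      (Continuous.prodMk_right s).tendsto t
    have hdt : deriv (fun τ => burgersSol c f₀ s τ) t = A (0, 1) := by
      rcases eq_or_lt_of_le ht.1 with h0 | h0
      · -- t = 0
        obtain rfl : t = 0 := h0.symm
        have hTpos : (0:ℝ) < 1 / (c * m) := ht.2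
        -- right-hand derivative
        have hr : HasDerivWithinAt (fun τ => burgersSol c f₀ s τ) (A (0, 1)) (Ici 0) 0 := by
          refine (hcurve_t.hasDerivWithinAt).congr_of_eventuallyEq ?_ hφp.symm
          have h1 : ∀ᶠ τ in 𝓝 (0:ℝ), τ < 1 / (c * m) := Filter.tendsto_id.eventually_lt_const hTpos
          filter_upwards [nhdsWithin_le_nhds (hcontt.eventually hsolq),
            nhdsWithin_le_nhds h1, self_mem_nhdsWithin] with τ hφτ hτT hτ0
          exact (hφτ ⟨hτ0, hτT⟩).symm
        -- value and slope facts
        have hsol0 : burgersSol c f₀ s 0 = f₀ s := by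
          rw [burgersSol_of_nonneg c f₀ s le_rfl]
          congr 1
          have hbij0 := burgersChr_bijective hc hm hf₀ hbound le_rfl hTpos
          have h00 : burgersChr c f₀ 0 s = s := by simp [burgersChr]
          conv_lhs => rw [← h00]
          exact Function.leftInverse_invFun hbij0.1 s
        have hF0 : F = f₀ s := hφp.trans hsol0
        have hk0 : k = deriv f₀ s := by rw [hkdef]; norm_num
        have hbval : A (0, 1) = -(c * f₀ s * deriv f₀ s) := by
          rw [hF0, hk0] at h01
          linear_combination h01
        -- left-hand derivative (linear extension)
        have hl : HasDerivWithinAt (fun τ => burgersSol c f₀ s τ) (A (0, 1)) (Iic 0) 0 := by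
          have hlin : HasDerivAt (fun τ : ℝ => f₀ s - c * f₀ s * deriv f₀ s * τ)
              (-(c * f₀ s * deriv f₀ s)) 0 := by
            simpa using ((hasDerivAt_id (0:ℝ)).const_mul (c * f₀ s * deriv f₀ s)).const_sub (f₀ s)
          rw [hbval]
          refine hlin.hasDerivWithinAt.congr ?_ ?_
          · intro τ hτ
            rcases eq_or_lt_of_le (mem_Iic.mp hτ) with rfl | hlt
            · simpa using hsol0
            · rw [burgersSol, if_neg (not_le.mpr hlt)]
          · simpa using hsol0
        have hu := hl.union hr
        rw [Iic_union_Ici] at hu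
        exact (hasDerivWithinAt_univ.mp hu).deriv
      · -- 0 < t
        refine (hcurve_t.congr_of_eventuallyEq ?_).deriv
        have h1 : ∀ᶠ τ in 𝓝 t, τ ∈ Set.Ico (0:ℝ) (1 / (c * m)) := by
          filter_upwards [Ioo_mem_nhds h0 ht.2] with τ hτ
          exact ⟨hτ.1.le, hτ.2⟩
        filter_upwards [hcontt.eventually hsolq, h1] with τ h2 h3
        exact (h2 h3).symm
    rw [hdt, hds, ← hφp]
    exact hsum
  · -- uniqueness
    intro g hg s t ht
    exact burgersSol_unique (burgersChr_bijective hc hm hf₀ hbound ht.1 ht.2) ht.1 (hg s t ht)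
end

section
/- Let v₁, v₂ be unit vectors in ℝ² with v₁·v₂ = -a, 0 < a < 1, and f₁, f₂ C¹ solutions of f_t + (1+a)ff_s = 0. Set u = f₁(x·v₁,t)v₁ + f₂(x·v₂,t)v₂ and w = f₁(x·v₁,t) + f₂(x·v₂,t). Then u_t + (u·∇)u + a w ∇w = 0 and w_t + u·∇w + a w div u = 0. -/
open scoped RealInnerProductSpace

private lemma aux_t {F : ℝ → ℝ → ℝ} (hF : ContDiff ℝ 1 (fun p : ℝ × ℝ => F p.1 p.2))
    (s t : ℝ) :
    HasDerivAt (fun τ => F s τ)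
      (fderiv ℝ (fun p : ℝ × ℝ => F p.1 p.2) (s, t) ((0:ℝ), (1:ℝ))) t := by
  have h := (hF.differentiable one_ne_zero (s, t)).hasFDerivAt
  have h2 : HasDerivAt (fun τ : ℝ => ((s, τ) : ℝ × ℝ)) ((0:ℝ), (1:ℝ)) t :=
    (hasDerivAt_const t s).prodMk (hasDerivAt_id t)
  exact h.comp_hasDerivAt t h2

private lemma aux_s {F : ℝ → ℝ → ℝ} (hF : ContDiff ℝ 1 (fun p : ℝ × ℝ => F p.1 p.2))
    (s t : ℝ) :
    HasDerivAt (fun σ => F σ t)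
      (fderiv ℝ (fun p : ℝ × ℝ => F p.1 p.2) (s, t) ((1:ℝ), (0:ℝ))) s := by
  have h := (hF.differentiable one_ne_zero (s, t)).hasFDerivAt
  have h2 : HasDerivAt (fun σ : ℝ => ((σ, t) : ℝ × ℝ)) ((1:ℝ), (0:ℝ)) s :=
    (hasDerivAt_id s).prodMk (hasDerivAt_const s t)
  exact h.comp_hasDerivAt s h2

private lemma aux_x {F : ℝ → ℝ → ℝ} (hF : ContDiff ℝ 1 (fun p : ℝ × ℝ => F p.1 p.2))
    (v x : EuclideanSpace ℝ (Fin 2)) (t : ℝ) :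
    HasFDerivAt (fun y : EuclideanSpace ℝ (Fin 2) => F ⟪y, v⟫ t)
      ((fderiv ℝ (fun p : ℝ × ℝ => F p.1 p.2) (⟪x, v⟫, t) ((1:ℝ), (0:ℝ))) • innerSL ℝ v)
      x := by
  have hinner : HasFDerivAt (fun y : EuclideanSpace ℝ (Fin 2) => (⟪y, v⟫ : ℝ))
      (innerSL ℝ v) x := by
    have heq : (fun y : EuclideanSpace ℝ (Fin 2) => (⟪y, v⟫ : ℝ))
        = fun y => (innerSL ℝ v) y := by
      funext y; rw [innerSL_apply_apply, real_inner_comm]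
    rw [heq]
    exact (innerSL ℝ v).hasFDerivAt
  have h2 : HasFDerivAt (fun y : EuclideanSpace ℝ (Fin 2) => ((⟪y, v⟫, t) : ℝ × ℝ))
      ((innerSL ℝ v).prod 0) x :=
    hinner.prodMk (hasFDerivAt_const t x)
  have h := ((hF.differentiable one_ne_zero (⟪x, v⟫, t)).hasFDerivAt).comp x h2
  refine h.congr_fderiv (Eq.symm ?_)
  ext h'
  show _ = fderiv ℝ (fun p : ℝ × ℝ => F p.1 p.2) (⟪x, v⟫, t) (((innerSL ℝ v).prod 0) h')
  have : ((innerSL ℝ v).prod 0) h' = (⟪v, h'⟫ : ℝ) • ((1:ℝ), (0:ℝ)) := by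
    simp [Prod.smul_mk]
  rw [this, map_smul]
  simp [mul_comm]
theorem stmt_18 (a : ℝ) (ha : 0 < a) (ha1 : a < 1)
    (v₁ v₂ : EuclideanSpace ℝ (Fin 2)) (hv₁ : ‖v₁‖ = 1) (hv₂ : ‖v₂‖ = 1)
    (hdot : ⟪v₁, v₂⟫ = -a)
    (f₁ f₂ : ℝ → ℝ → ℝ)
    (hf₁ : ContDiff ℝ 1 (fun p : ℝ × ℝ => f₁ p.1 p.2))
    (hf₂ : ContDiff ℝ 1 (fun p : ℝ × ℝ => f₂ p.1 p.2))
    (hb₁ : ∀ s t : ℝ,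
      deriv (fun τ => f₁ s τ) t + (1 + a) * f₁ s t * deriv (fun σ => f₁ σ t) s = 0)
    (hb₂ : ∀ s t : ℝ,
      deriv (fun τ => f₂ s τ) t + (1 + a) * f₂ s t * deriv (fun σ => f₂ σ t) s = 0)
    (u : EuclideanSpace ℝ (Fin 2) → ℝ → EuclideanSpace ℝ (Fin 2))
    (hu : u = fun x t => f₁ ⟪x, v₁⟫ t • v₁ + f₂ ⟪x, v₂⟫ t • v₂)
    (w : EuclideanSpace ℝ (Fin 2) → ℝ → ℝ)
    (hw : w = fun x t => f₁ ⟪x, v₁⟫ t + f₂ ⟪x, v₂⟫ t) :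
    ∀ (x : EuclideanSpace ℝ (Fin 2)) (t : ℝ),
      (deriv (fun τ => u x τ) t + fderiv ℝ (fun y => u y t) x (u x t)
        + (a * w x t) • gradient (fun y => w y t) x = 0) ∧
      (deriv (fun τ => w x τ) t + ⟪u x t, gradient (fun y => w y t) x⟫
        + a * w x t *
          (∑ i, fderiv ℝ (fun y => u y t i) x (EuclideanSpace.single i 1)) = 0) := by
  subst hu hw
  intro x t
  beta_reduce
  -- spatial derivatives
  obtain ⟨d₁, Hx₁, Hsd₁⟩ : ∃ d : ℝ,
      HasFDerivAt (fun y : EuclideanSpace ℝ (Fin 2) => f₁ ⟪y, v₁⟫ t)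
        (d • innerSL ℝ v₁) x ∧ HasDerivAt (fun σ => f₁ σ t) d ⟪x, v₁⟫ :=
    ⟨_, aux_x hf₁ v₁ x t, aux_s hf₁ ⟪x, v₁⟫ t⟩
  obtain ⟨d₂, Hx₂, Hsd₂⟩ : ∃ d : ℝ,
      HasFDerivAt (fun y : EuclideanSpace ℝ (Fin 2) => f₂ ⟪y, v₂⟫ t)
        (d • innerSL ℝ v₂) x ∧ HasDerivAt (fun σ => f₂ σ t) d ⟪x, v₂⟫ :=
    ⟨_, aux_x hf₂ v₂ x t, aux_s hf₂ ⟪x, v₂⟫ t⟩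
  -- time derivatives
  obtain ⟨p₁, Ht₁⟩ : ∃ p : ℝ, HasDerivAt (fun τ => f₁ ⟪x, v₁⟫ τ) p t :=
    ⟨_, aux_t hf₁ ⟪x, v₁⟫ t⟩
  obtain ⟨p₂, Ht₂⟩ : ∃ p : ℝ, HasDerivAt (fun τ => f₂ ⟪x, v₂⟫ τ) p t :=
    ⟨_, aux_t hf₂ ⟪x, v₂⟫ t⟩
  -- Burgers equations
  have hb₁' : p₁ + (1 + a) * f₁ ⟪x, v₁⟫ t * d₁ = 0 := by
    have := hb₁ ⟪x, v₁⟫ t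
    rwa [Ht₁.deriv, Hsd₁.deriv] at this
  have hb₂' : p₂ + (1 + a) * f₂ ⟪x, v₂⟫ t * d₂ = 0 := by
    have := hb₂ ⟪x, v₂⟫ t
    rwa [Ht₂.deriv, Hsd₂.deriv] at this
  -- inner product facts
  have hv₁v₁ : (⟪v₁, v₁⟫ : ℝ) = 1 := by
    rw [real_inner_self_eq_norm_sq, hv₁]; norm_num
  have hv₂v₂ : (⟪v₂, v₂⟫ : ℝ) = 1 := by
    rw [real_inner_self_eq_norm_sq, hv₂]; norm_num
  have hdot' : (⟪v₂, v₁⟫ : ℝ) = -a := by rw [real_inner_comm]; exact hdot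
  -- derivative of u in time
  have Hut : deriv (fun τ => f₁ ⟪x, v₁⟫ τ • v₁ + f₂ ⟪x, v₂⟫ τ • v₂) t
      = p₁ • v₁ + p₂ • v₂ := ((Ht₁.smul_const v₁).add (Ht₂.smul_const v₂)).deriv
  -- derivative of w in time
  have Hwt : deriv (fun τ => f₁ ⟪x, v₁⟫ τ + f₂ ⟪x, v₂⟫ τ) t = p₁ + p₂ :=
    (Ht₁.add Ht₂).deriv
  -- spatial fderiv of u
  have HU : HasFDerivAt
      (fun y : EuclideanSpace ℝ (Fin 2) => f₁ ⟪y, v₁⟫ t • v₁ + f₂ ⟪y, v₂⟫ t • v₂)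
      ((d₁ • innerSL ℝ v₁).smulRight v₁ + (d₂ • innerSL ℝ v₂).smulRight v₂) x :=
    (Hx₁.smul_const v₁).add (Hx₂.smul_const v₂)
  -- gradient of w
  have HW : gradient (fun y : EuclideanSpace ℝ (Fin 2) => f₁ ⟪y, v₁⟫ t + f₂ ⟪y, v₂⟫ t) x
      = d₁ • v₁ + d₂ • v₂ := by
    apply HasGradientAt.gradient
    rw [hasGradientAt_iff_hasFDerivAt]
    have h := Hx₁.add Hx₂
    refine h.congr_fderiv (Eq.symm ?_)
    ext y
    rw [InnerProductSpace.toDual_apply_apply]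
    simp only [ContinuousLinearMap.add_apply, ContinuousLinearMap.smul_apply, innerSL_apply_apply,
      inner_add_left, real_inner_smul_left, smul_eq_mul]
  -- the divergence
  have Hdiv : ∀ i : Fin 2,
      fderiv ℝ (fun y : EuclideanSpace ℝ (Fin 2) =>
        (f₁ ⟪y, v₁⟫ t • v₁ + f₂ ⟪y, v₂⟫ t • v₂) i) x (EuclideanSpace.single i 1)
      = d₁ * (v₁ i * v₁ i) + d₂ * (v₂ i * v₂ i) := by
    intro i
    have hcomp := ((EuclideanSpace.proj (𝕜 := ℝ) i).hasFDerivAt.comp x HU).fderiv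
    have heq : (fun y : EuclideanSpace ℝ (Fin 2) =>
        (f₁ ⟪y, v₁⟫ t • v₁ + f₂ ⟪y, v₂⟫ t • v₂) i)
        = (EuclideanSpace.proj (𝕜 := ℝ) i) ∘
          (fun y : EuclideanSpace ℝ (Fin 2) => f₁ ⟪y, v₁⟫ t • v₁ + f₂ ⟪y, v₂⟫ t • v₂) := rfl
    rw [heq, hcomp]
    simp only [ContinuousLinearMap.coe_comp', Function.comp_apply, ContinuousLinearMap.comp_apply,
      ContinuousLinearMap.add_apply, ContinuousLinearMap.smulRight_apply,
      ContinuousLinearMap.smul_apply, innerSL_apply_apply, EuclideanSpace.inner_single_right,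
      conj_trivial, one_mul, smul_eq_mul]
    show ((d₁ * v₁ i) • v₁ + (d₂ * v₂ i) • v₂ : EuclideanSpace ℝ (Fin 2)) i = _
    simp only [PiLp.add_apply, PiLp.smul_apply, smul_eq_mul]
    ring
  have Hsum : ∑ i : Fin 2, (d₁ * (v₁ i * v₁ i) + d₂ * (v₂ i * v₂ i)) = d₁ + d₂ := by
    have h1 : ∑ i : Fin 2, v₁ i * v₁ i = 1 := by
      have : (⟪v₁, v₁⟫ : ℝ) = ∑ i : Fin 2, v₁ i * v₁ i := by
        simp only [PiLp.inner_apply, RCLike.inner_apply, conj_trivial]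
      rw [← this, hv₁v₁]
    have h2 : ∑ i : Fin 2, v₂ i * v₂ i = 1 := by
      have : (⟪v₂, v₂⟫ : ℝ) = ∑ i : Fin 2, v₂ i * v₂ i := by
        simp only [PiLp.inner_apply, RCLike.inner_apply, conj_trivial]
      rw [← this, hv₂v₂]
    rw [Finset.sum_add_distrib, ← Finset.mul_sum, ← Finset.mul_sum, h1, h2]
    ring
  constructor
  · rw [Hut, HU.fderiv, HW]
    have happ : ((d₁ • innerSL ℝ v₁).smulRight v₁ + (d₂ • innerSL ℝ v₂).smulRight v₂)
        (f₁ ⟪x, v₁⟫ t • v₁ + f₂ ⟪x, v₂⟫ t • v₂)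
        = (d₁ * (f₁ ⟪x, v₁⟫ t - a * f₂ ⟪x, v₂⟫ t)) • v₁
          + (d₂ * (f₂ ⟪x, v₂⟫ t - a * f₁ ⟪x, v₁⟫ t)) • v₂ := by
      simp only [ContinuousLinearMap.add_apply, ContinuousLinearMap.smulRight_apply,
        ContinuousLinearMap.smul_apply, innerSL_apply_apply, inner_add_right, real_inner_smul_right,
        hv₁v₁, hv₂v₂, hdot, hdot', smul_eq_mul]
      module
    rw [happ]
    match_scalars
    · linear_combination hb₁'
    · linear_combination hb₂'
  · rw [Hwt, HW]
    have hsum' : ∑ i : Fin 2, fderiv ℝ (fun y : EuclideanSpace ℝ (Fin 2) =>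
        (f₁ ⟪y, v₁⟫ t • v₁ + f₂ ⟪y, v₂⟫ t • v₂) i) x (EuclideanSpace.single i 1)
        = d₁ + d₂ := by
      rw [Finset.sum_congr rfl (fun i _ => Hdiv i), Hsum]
    rw [hsum']
    have hin : (⟪f₁ ⟪x, v₁⟫ t • v₁ + f₂ ⟪x, v₂⟫ t • v₂, d₁ • v₁ + d₂ • v₂⟫ : ℝ)
        = f₁ ⟪x, v₁⟫ t * d₁ + f₂ ⟪x, v₂⟫ t * d₂
          - a * (f₁ ⟪x, v₁⟫ t * d₂ + f₂ ⟪x, v₂⟫ t * d₁) := by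
      simp only [inner_add_left, inner_add_right, real_inner_smul_left, real_inner_smul_right,
        hv₁v₁, hv₂v₂, hdot, hdot']
      ring
    rw [hin]
    linear_combination hb₁' + hb₂'
end
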